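/- (Greedy Tree Lemma) In a tree T with pebble distribution p and target vertex r, the maximum number of pebbles that can be placed on r by any sequence of pebbling moves is achieved by the greedy strategy that repeatedly makes arbitrary pebbling moves uv satisfying d(v,r) < d(u,r) until none are possible. -/

import Mathlib

variable {V : Type*} [DecidableEq V]

/-- Result of a pebbling move `u → v`: remove two pebbles from `u`, add one to `v`. -/
def applyMove (p : V → ℕ) (u v : V) (x : V) : ℕ :=
  (if x = u then p x - 2 else p x) + (if x = v then 1 else 0)

/-- A list of moves is a valid sequence of pebbling moves from `p` in `G`. -/
def IsValidSeq (G : SimpleGraph V) : (V → ℕ) → List (V × V) → Prop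
  | _, [] => True
  | p, m :: rest => G.Adj m.1 m.2 ∧ 2 ≤ p m.1 ∧ IsValidSeq G (applyMove p m.1 m.2) rest

/-- The distribution after executing a sequence of pebbling moves. -/
def applySeq (p : V → ℕ) : List (V × V) → V → ℕ
  | [] => p
  | m :: rest => applySeq (applyMove p m.1 m.2) rest

/-- Indegree of a vertex in a directed multigraph (multiset of directed edges). -/
def indeg (D : Multiset (V × V)) (v : V) : ℕ :=
  Multiset.card (D.filter fun e => e.2 = v)

/-- Outdegree of a vertex in a directed multigraph. -/
def outdeg (D : Multiset (V × V)) (v : V) : ℕ :=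
  Multiset.card (D.filter fun e => e.1 = v)

/-- balance(D,p,v) = p(v) + indeg_D(v) - 2·outdeg_D(v). -/
def balance (D : Multiset (V × V)) (p : V → ℕ) (v : V) : ℤ :=
  (p v : ℤ) + (indeg D v : ℤ) - 2 * (outdeg D v : ℤ)

/-- `D` is orderable under `p`: some ordering of the edge multiset of `D`
is a valid sequence of pebbling moves. -/
def Orderable (G : SimpleGraph V) (D : Multiset (V × V)) (p : V → ℕ) : Prop :=
  ∃ σ : List (V × V), (σ : Multiset (V × V)) = D ∧ IsValidSeq G p σ

/-- A directed multigraph is acyclic if its edge relation admits no directed cycle. -/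
def DAcyclic (D : Multiset (V × V)) : Prop :=
  ∀ v : V, ¬ Relation.TransGen (fun a b => (a, b) ∈ D) v v

/-- The strongly connected component of `a` in the directed multigraph `D`. -/
def SCC (D : Multiset (V × V)) (a : V) : Set V :=
  {b | Relation.ReflTransGen (fun x y => (x, y) ∈ D) a b ∧
       Relation.ReflTransGen (fun x y => (x, y) ∈ D) b a}


section GreedyTreeLemmaAux

set_option linter.unusedSectionVars false
set_option linter.unreachableTactic false
set_option linter.unusedTactic false

open SimpleGraph

/-- Adjacent vertices in a tree have distances to `r` differing by exactly one. -/
lemma tree_adj_dist_cases (T : SimpleGraph V) (hT : T.IsTree) {z b : V} (r : V)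
    (hadj : T.Adj z b) :
    T.dist b r = T.dist z r + 1 ∨ T.dist z r = T.dist b r + 1 := by
  have hc := hT.isConnected
  have h1 : T.dist z b = 1 := dist_eq_one_iff_adj.mpr hadj
  have h2 : T.dist b z = 1 := dist_eq_one_iff_adj.mpr hadj.symm
  have t1 : T.dist b r ≤ T.dist b z + T.dist z r := hc.dist_triangle
  have t2 : T.dist z r ≤ T.dist z b + T.dist b r := hc.dist_triangle
  have hne : T.dist b r ≠ T.dist z r := by
    intro h
    have hzb : z ≠ b := hadj.ne
    obtain ⟨P, hP, hlen⟩ := hc.exists_path_of_dist b r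
    by_cases hz : z ∈ P.support
    · have hd : T.dist z r ≤ (P.dropUntil z hz).length := dist_le _
      have hsum : (P.takeUntil z hz).length + (P.dropUntil z hz).length = P.length := by
        rw [← SimpleGraph.Walk.length_append, SimpleGraph.Walk.take_spec]
      have ht1 : (P.takeUntil z hz).length ≠ 0 := by
        intro h0
        exact hzb (SimpleGraph.Walk.eq_of_length_eq_zero h0).symm
      omega
    · have hQ : (SimpleGraph.Walk.cons hadj P).IsPath := hP.cons hz
      obtain ⟨P', hP', hlen'⟩ := hc.exists_path_of_dist z r
      have huniq := (isAcyclic_iff_path_unique.mp hT.IsAcyclic)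
        (⟨_, hQ⟩ : T.Path z r) (⟨P', hP'⟩ : T.Path z r)
      have : (SimpleGraph.Walk.cons hadj P).length = P'.length :=
        congrArg SimpleGraph.Walk.length (Subtype.ext_iff.mp huniq)
      rw [SimpleGraph.Walk.length_cons] at this
      omega
  omega

/-- In a tree, the closer neighbor is unique. -/
lemma tree_unique_closer (T : SimpleGraph V) (hT : T.IsTree) {z b c : V} (r : V)
    (hb : T.Adj z b) (hc : T.Adj z c)
    (hdb : T.dist b r + 1 = T.dist z r) (hdc : T.dist c r + 1 = T.dist z r) :
    b = c := by
  have hcon := hT.isConnected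
  have key : ∀ (x : V) (hx : T.Adj z x), T.dist x r + 1 = T.dist z r →
      ∃ (P : T.Walk x r), P.IsPath ∧ P.length = T.dist x r ∧ z ∉ P.support := by
    intro x hx hdx
    obtain ⟨P, hP, hlen⟩ := hcon.exists_path_of_dist x r
    refine ⟨P, hP, hlen, ?_⟩
    intro hz
    have hd : T.dist z r ≤ (P.dropUntil z hz).length := dist_le _
    have : (P.dropUntil z hz).length ≤ P.length := SimpleGraph.Walk.length_dropUntil_le P hz
    omega
  obtain ⟨Pb, hPb, hlb, hzb⟩ := key b hb hdb
  obtain ⟨Pc, hPc, hlc, hzc⟩ := key c hc hdc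
  have hQb : (SimpleGraph.Walk.cons hb Pb).IsPath := hPb.cons hzb
  have hQc : (SimpleGraph.Walk.cons hc Pc).IsPath := hPc.cons hzc
  have huniq := (isAcyclic_iff_path_unique.mp hT.IsAcyclic)
    (⟨_, hQb⟩ : T.Path z r) (⟨_, hQc⟩ : T.Path z r)
  have := congrArg (fun w : T.Walk z r => w.getVert 1) (Subtype.ext_iff.mp huniq)
  simpa [SimpleGraph.Walk.getVert_cons_succ] using this

/-- Every vertex other than `r` has a neighbor strictly closer to `r`. -/
lemma tree_exists_closer (T : SimpleGraph V) (hT : T.IsTree) {u : V} (r : V) (hu : u ≠ r) :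
    ∃ w, T.Adj u w ∧ T.dist w r + 1 = T.dist u r := by
  have hc := hT.isConnected
  have hd : 0 < T.dist u r := hc.pos_dist_of_ne hu
  obtain ⟨P, hlen⟩ := hc.exists_walk_length_eq_dist u r
  cases P with
  | nil => simp at hd
  | cons hadj Q =>
    rename_i w
    refine ⟨w, hadj, ?_⟩
    have h1 : T.dist w r ≤ Q.length := dist_le _
    have h2 : T.dist u r ≤ T.dist u w + T.dist w r := hc.dist_triangle
    have h3 : T.dist u w = 1 := dist_eq_one_iff_adj.mpr hadj
    rw [SimpleGraph.Walk.length_cons] at hlen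
    omega

/-- Betweenness propagation along an edge, away from the between-vertex. -/
lemma tree_between_step (T : SimpleGraph V) (hT : T.IsTree) {z b s : V} (r : V)
    (hadj : T.Adj z b) (hbet : T.dist z s + T.dist s r = T.dist z r)
    (hsz : s ≠ z) (hsb : s ≠ b) :
    T.dist b s + T.dist s r = T.dist b r := by
  have hc := hT.isConnected
  have hbz : T.dist b z = 1 := dist_eq_one_iff_adj.mpr hadj.symm
  have h1 : T.dist b s ≤ T.dist b z + T.dist z s := hc.dist_triangle
  have h2 : T.dist b r ≤ T.dist b s + T.dist s r := hc.dist_triangle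
  rcases tree_adj_dist_cases T hT r hadj with hcase | hcase
  · omega
  · -- b is the closer neighbor of z; find the second vertex of a geodesic z → s
    have hds : 0 < T.dist z s := hc.pos_dist_of_ne (Ne.symm hsz)
    obtain ⟨W, hlenW⟩ := hc.exists_walk_length_eq_dist z s
    cases W with
    | nil => simp at hlenW; omega
    | cons hadj' W' =>
      rename_i c
      rw [SimpleGraph.Walk.length_cons] at hlenW
      have hcs : T.dist c s ≤ W'.length := dist_le _
      have hc1 : T.dist c r ≤ T.dist c s + T.dist s r := hc.dist_triangle
      have hc2 : T.dist z r ≤ T.dist z c + T.dist c r := hc.dist_triangle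
      have hzc : T.dist z c = 1 := dist_eq_one_iff_adj.mpr hadj'
      have hcr : T.dist c r + 1 = T.dist z r := by omega
      have hbc : b = c := tree_unique_closer T hT r hadj hadj' (by omega) hcr
      subst hbc
      omega

lemma peb_mono (G : SimpleGraph V) :
    ∀ (ρ : List (V × V)) (q p : V → ℕ), (∀ x, q x ≤ p x) → IsValidSeq G q ρ →
    IsValidSeq G p ρ ∧ ∀ x, applySeq q ρ x ≤ applySeq p ρ x := by
  intro ρ
  induction ρ with
  | nil => exact fun q p h _ => ⟨trivial, h⟩
  | cons m rest ih =>
    intro q p h hv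
    obtain ⟨hadj, h2, hrest⟩ := hv
    have hmono : ∀ x, applyMove q m.1 m.2 x ≤ applyMove p m.1 m.2 x := by
      intro x
      simp only [applyMove]
      have := h x
      split_ifs <;> omega
    obtain ⟨hval, hle⟩ := ih _ _ hmono hrest
    exact ⟨⟨hadj, le_trans h2 (h m.1), hval⟩, hle⟩

/-- Key deficiency-tracking lemma: if `pp` dominates `q` except for a deficiency of at
most `k ≤ 2` pebbles at `z`, and has a surplus pebble at a vertex `s` lying between
`z` and `r`, then `pp` can match any achievement of `q` at `r`. -/
lemma def_lemma (T : SimpleGraph V) (hT : T.IsTree) (r : V) :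
    ∀ (ρ : List (V × V)) (q pp : V → ℕ) (z s : V) (k : ℕ), k ≤ 2 →
    IsValidSeq T q ρ → s ≠ z →
    T.dist z s + T.dist s r = T.dist z r →
    (∀ x, x ≠ z → x ≠ s → q x ≤ pp x) → q z ≤ pp z + k → q s + 1 ≤ pp s →
    ∃ ρ', IsValidSeq T pp ρ' ∧ applySeq q ρ r ≤ applySeq pp ρ' r := by
  intro ρ
  induction ρ with
  | nil =>
    intro q pp z s k hk _ hsz hbet hall hz hs
    refine ⟨[], trivial, ?_⟩
    show q r ≤ pp r
    have hzr : z ≠ r := by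
      intro h
      subst h
      have h0 : T.dist z s = 0 := by
        have := T.dist_self (v := z)
        omega
      exact hsz ((hT.isConnected.dist_eq_zero_iff).mp (by rwa [SimpleGraph.dist_comm] at h0))
    by_cases hrs : r = s
    · subst hrs; omega
    · exact hall r (Ne.symm hzr) hrs
  | cons m rest ih =>
    obtain ⟨a, b⟩ := m
    intro q pp z s k hk hv hsz hbet hall hz hs
    obtain ⟨hadj, h2, hrest⟩ := hv
    dsimp only at hadj h2 hrest
    have hmne : a ≠ b := hadj.ne
    by_cases hskip : a = z ∧ pp z < 2
    · -- the move cannot be replayed: skip it, the deficiency migrates to b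
      obtain ⟨haz, hpz⟩ := hskip
      subst haz
      have hq2 : 2 ≤ q a := h2
      by_cases hbs : b = s
      · -- deficiency cancels against the surplus
        subst hbs
        have hle : ∀ x, applyMove q a b x ≤ pp x := by
          intro x
          have h1 := hall x
          simp only [applyMove]
          split_ifs <;> (try subst_vars) <;>
            first
              | omega
              | (exact absurd rfl hmne)
              | (have := h1 (by omega) (by omega); omega)
              | (have := h1 ‹_› ‹_›; omega)
        obtain ⟨hval, hle2⟩ := peb_mono T rest _ pp hle hrest
        exact ⟨rest, hval, hle2 r⟩
      · -- deficiency moves to b with size 1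
        have hadjz : T.Adj a b := hadj
        have hbet' : T.dist b s + T.dist s r = T.dist b r :=
          tree_between_step T hT r hadjz hbet hsz (fun h => hbs h.symm)
        have hall' : ∀ x, x ≠ b → x ≠ s → applyMove q a b x ≤ pp x := by
          intro x hxb hxs
          have h1 := hall x
          simp only [applyMove]
          split_ifs <;> (try subst_vars) <;>
            first
              | omega
              | (exact absurd rfl hxb)
              | (have := h1 ‹_› ‹_›; omega)
        have hz' : applyMove q a b b ≤ pp b + 1 := by
          have h1 := hall b (fun h => hmne h.symm) hbs
          simp only [applyMove]
          split_ifs <;> (try subst_vars) <;>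
            first
              | omega
              | (exact absurd rfl hmne)
        have hs' : applyMove q a b s + 1 ≤ pp s := by
          simp only [applyMove]
          split_ifs <;> (try subst_vars) <;>
            first
              | omega
              | (exact absurd rfl hbs)
              | (exact absurd rfl hsz)
        obtain ⟨ρ', hval, hres⟩ := ih _ pp b s 1 (by norm_num) hrest
          (fun h => hbs h.symm) hbet' hall' hz' hs'
        exact ⟨ρ', hval, hres⟩
    · -- replay the move
      have hpa : 2 ≤ pp a := by
        by_cases h1 : a = z
        · rcases Nat.lt_or_ge (pp z) 2 with h | h
          · exact absurd ⟨h1, h⟩ hskip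
          · exact h1 ▸ h
        · by_cases hx2 : a = s
          · rw [hx2] at h2 ⊢; omega
          · exact le_trans h2 (hall a h1 hx2)
      have hall' : ∀ x, x ≠ z → x ≠ s →
          applyMove q a b x ≤ applyMove pp a b x := by
        intro x hx1 hx2
        have := hall x hx1 hx2
        simp only [applyMove]
        split_ifs <;> (try subst_vars) <;> omega
      have hz' : applyMove q a b z ≤ applyMove pp a b z + k := by
        simp only [applyMove]
        split_ifs <;> (try subst_vars) <;> omega
      have hs' : applyMove q a b s + 1 ≤ applyMove pp a b s := by
        simp only [applyMove]
        split_ifs <;> (try subst_vars) <;> omega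
      obtain ⟨ρ', hval, hres⟩ := ih _ _ z s k hk hrest hsz hbet hall' hz' hs'
      exact ⟨(a, b) :: ρ', ⟨hadj, hpa, hval⟩, hres⟩

lemma sum_erase2 {S : Finset V} (f : V → ℕ) {a b : V} (ha : a ∈ S) (hb : b ∈ S)
    (hab : a ≠ b) :
    ∑ x ∈ S, f x = f a + (f b + ∑ x ∈ (S.erase a).erase b, f x) := by
  rw [Finset.add_sum_erase _ f (Finset.mem_erase.mpr ⟨fun h => hab h.symm, hb⟩),
    Finset.add_sum_erase _ f ha]

/-- Potential bound: the pebbles reaching `r` are at most `p r` plus the total excess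
over one pebble at other relevant vertices. -/
lemma move_bound (T : SimpleGraph V) (r : V) (S : Finset V) :
    ∀ (σ : List (V × V)) (p : V → ℕ), IsValidSeq T p σ →
    (∀ m ∈ σ, m.1 ∈ S ∧ m.2 ∈ S) → r ∈ S →
    applySeq p σ r ≤ p r + ∑ x ∈ S.erase r, (p x - 1) := by
  intro σ
  induction σ with
  | nil => exact fun p _ _ _ => Nat.le_add_right _ _
  | cons m rest ih =>
    obtain ⟨a, b⟩ := m
    intro p hv hmem hr
    obtain ⟨hadj, h2, hrest⟩ := hv
    dsimp only at hadj h2 hrest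
    have hab : a ≠ b := hadj.ne
    have haS : a ∈ S := (hmem _ (List.mem_cons_self)).1
    have hbS : b ∈ S := (hmem _ (List.mem_cons_self)).2
    have hmem' : ∀ m ∈ rest, m.1 ∈ S ∧ m.2 ∈ S := fun m hm => hmem m (List.mem_cons_of_mem _ hm)
    have step := ih (applyMove p a b) hrest hmem' hr
    refine le_trans step ?_
    -- now show the potential does not increase
    have hpa : applyMove p a b a = p a - 2 := by
      simp [applyMove, hab]
    have hpb : applyMove p a b b = p b + 1 := by
      simp [applyMove, Ne.symm hab]
    have hpo : ∀ x, x ≠ a → x ≠ b → applyMove p a b x = p x := by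
      intro x h1 h2
      simp [applyMove, h1, h2]
    by_cases har : a = r
    · subst har
      have hbr : b ≠ a := fun h => hab h.symm
      have hbS' : b ∈ S.erase a := Finset.mem_erase.mpr ⟨hbr, hbS⟩
      rw [← Finset.add_sum_erase _ _ hbS', ← Finset.add_sum_erase _ (fun x => p x - 1) hbS']
      have hrem : ∑ x ∈ (S.erase a).erase b, (applyMove p a b x - 1)
          = ∑ x ∈ (S.erase a).erase b, (p x - 1) := by
        apply Finset.sum_congr rfl
        intro x hx
        rw [hpo x (Finset.ne_of_mem_erase (Finset.mem_of_mem_erase hx)) (Finset.ne_of_mem_erase hx)]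
      rw [hrem, hpa, hpb]
      omega
    · by_cases hbr : b = r
      · subst hbr
        have haS' : a ∈ S.erase b := Finset.mem_erase.mpr ⟨har, haS⟩
        rw [← Finset.add_sum_erase _ _ haS', ← Finset.add_sum_erase _ (fun x => p x - 1) haS']
        have hrem : ∑ x ∈ (S.erase b).erase a, (applyMove p a b x - 1)
            = ∑ x ∈ (S.erase b).erase a, (p x - 1) := by
          apply Finset.sum_congr rfl
          intro x hx
          rw [hpo x (Finset.ne_of_mem_erase hx) (Finset.ne_of_mem_erase (Finset.mem_of_mem_erase hx))]
        rw [hrem, hpa, hpb]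
        omega
      · have haS' : a ∈ S.erase r := Finset.mem_erase.mpr ⟨har, haS⟩
        have hbS' : b ∈ S.erase r := Finset.mem_erase.mpr ⟨hbr, hbS⟩
        rw [sum_erase2 _ haS' hbS' hab, sum_erase2 (fun x => p x - 1) haS' hbS' hab]
        have hrem : ∑ x ∈ ((S.erase r).erase a).erase b, (applyMove p a b x - 1)
            = ∑ x ∈ ((S.erase r).erase a).erase b, (p x - 1) := by
          apply Finset.sum_congr rfl
          intro x hx
          rw [hpo x (Finset.ne_of_mem_erase (Finset.mem_of_mem_erase hx)) (Finset.ne_of_mem_erase hx)]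
        rw [hrem, hpa, hpb, hpo r (fun h => har h.symm) (fun h => hbr h.symm)]
        omega


end GreedyTreeLemmaAux

/-- Greedy Tree Lemma: in a tree, any maximal greedy sequence of pebbling moves places
at least as many pebbles on the target `r` as any other sequence. -/
theorem greedy_tree_lemma (T : SimpleGraph V) (hT : T.IsTree) (p : V → ℕ) (r : V)
    (σ τ : List (V × V)) (hσ : IsValidSeq T p σ) (hτ : IsValidSeq T p τ)
    (hgreedy : ∀ m ∈ τ, T.dist m.2 r < T.dist m.1 r)
    (hstuck : ¬ ∃ u w : V, T.Adj u w ∧ 2 ≤ applySeq p τ u ∧ T.dist w r < T.dist u r) :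
    applySeq p σ r ≤ applySeq p τ r := by
  induction τ generalizing p σ with
  | nil =>
    rw [show applySeq p ([] : List (V × V)) = p from rfl] at hstuck
    -- `p` is stuck: every vertex other than `r` has at most one pebble
    have hb : ∀ u, u ≠ r → p u ≤ 1 := by
      intro u hu
      by_contra hge
      obtain ⟨w, hadj, hw⟩ := tree_exists_closer T hT r hu
      exact hstuck ⟨u, w, hadj, by omega, by omega⟩
    classical
    set S : Finset V :=
      insert r ((σ.map Prod.fst).toFinset ∪ (σ.map Prod.snd).toFinset) with hS
    have hmem : ∀ m ∈ σ, m.1 ∈ S ∧ m.2 ∈ S := by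
      intro m hm
      constructor
      · exact Finset.mem_insert_of_mem (Finset.mem_union_left _
          (List.mem_toFinset.mpr (List.mem_map.mpr ⟨m, hm, rfl⟩)))
      · exact Finset.mem_insert_of_mem (Finset.mem_union_right _
          (List.mem_toFinset.mpr (List.mem_map.mpr ⟨m, hm, rfl⟩)))
    have hbound := move_bound T r S σ p hσ hmem (Finset.mem_insert_self r _)
    have hzero : ∑ x ∈ S.erase r, (p x - 1) = 0 := by
      apply Finset.sum_eq_zero
      intro x hx
      have := hb x (Finset.ne_of_mem_erase hx)
      omega
    show applySeq p σ r ≤ p r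
    omega
  | cons m rest ih =>
    obtain ⟨a, b⟩ := m
    obtain ⟨hadj, h2, hrest⟩ := hτ
    dsimp only at hadj h2 hrest
    have hg := hgreedy (a, b) (List.mem_cons_self)
    dsimp only at hg
    have hab : a ≠ b := hadj.ne
    -- exchange: performing the greedy move first can only help
    have hbet : T.dist a b + T.dist b r = T.dist a r := by
      have h1 : T.dist a b = 1 := SimpleGraph.dist_eq_one_iff_adj.mpr hadj
      have h3 : T.dist a r ≤ T.dist a b + T.dist b r := hT.isConnected.dist_triangle
      omega
    obtain ⟨σ', hσ', hres⟩ := def_lemma T hT r σ p (applyMove p a b) a b 2 le_rfl hσ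
      (fun h => hab h.symm) hbet
      (by
        intro x h1 h3
        simp [applyMove, h1, h3])
      (by
        have : applyMove p a b a = p a - 2 := by simp [applyMove, hab]
        omega)
      (by
        have : applyMove p a b b = p b + 1 := by simp [applyMove, Ne.symm hab]
        omega)
    have hfinal := ih (applyMove p a b) σ' hσ' hrest
      (fun m hm => hgreedy m (List.mem_cons_of_mem _ hm)) hstuck
    exact le_trans hres hfinal
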